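/- For every nonnegative integer n and all x, x^n = (1/2) Σ_{k=0}^{⌊n/2⌋} (E_{2k}/(2k)!) · (n!/(n−2k)!) · [(x−1)^{n−2k} + (x+1)^{n−2k}], where E_{2k} are the Euler numbers. Equivalently, for every polynomial p ∈ ℂ[x], p(x) = (1/2) Σ_{k≥0} (E_{2k}/(2k)!) [p^{(2k)}(x−1) + p^{(2k)}(x+1)]. -/

import Mathlib

open Polynomial

/-- `eulerE n` is the Euler number `E_{2n}`, defined through the recurrence coming from
`E(t)·cosh(t) = 1`, i.e. `Σ_{k=0}^{n} C(2n,2k) E_{2k} = δ_{n,0}`, equivalent to the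
exponential generating function `2eᵗ/(e^{2t}+1) = Σ E_k tᵏ/k!` (with `E_{2k+1} = 0`). -/
noncomputable def eulerE : ℕ → ℂ
  | 0 => 1
  | n + 1 =>
      -∑ k ∈ (Finset.range (n + 1)).attach,
          ((Nat.choose (2 * (n + 1)) (2 * k.1)) : ℂ) * eulerE k.1
  decreasing_by exact Finset.mem_range.mp k.2

lemma eulerE_rec (m : ℕ) :
    ∑ k ∈ Finset.range (m + 1), ((Nat.choose (2 * m) (2 * k)) : ℂ) * eulerE k
      = if m = 0 then 1 else 0 := by
  cases m with
  | zero => simp [eulerE]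
  | succ n =>
    have h : eulerE (n + 1) = -∑ k ∈ (Finset.range (n + 1)).attach,
        ((Nat.choose (2 * (n + 1)) (2 * k.1)) : ℂ) * eulerE k.1 := by
      rw [eulerE]
    rw [Finset.sum_attach _ (fun k => ((Nat.choose (2 * (n + 1)) (2 * k)) : ℂ) * eulerE k)] at h
    rw [Finset.sum_range_succ, Nat.choose_self, h]
    simp

lemma sum_two_mul (f : ℕ → ℂ) (N : ℕ) :
    ∑ j ∈ Finset.range (2 * N), f j = ∑ i ∈ Finset.range N, (f (2 * i) + f (2 * i + 1)) := by
  induction N with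
  | zero => simp
  | succ n ih =>
    rw [show 2 * (n + 1) = (2 * n + 1) + 1 by ring, Finset.sum_range_succ, Finset.sum_range_succ,
      ih, Finset.sum_range_succ]
    ring

lemma pow_sub_add (m : ℕ) (x : ℂ) :
    (x - 1) ^ m + (x + 1) ^ m
      = 2 * ∑ i ∈ Finset.range (m + 1), (Nat.choose m (2 * i) : ℂ) * x ^ (m - 2 * i) := by
  have h1 : (x + 1) ^ m = ∑ j ∈ Finset.range (m + 1), x ^ j * (Nat.choose m j : ℂ) := by
    rw [add_pow]; simp
  have h2 : (x - 1) ^ m = ∑ j ∈ Finset.range (m + 1),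
      x ^ j * (-1 : ℂ) ^ (m - j) * (Nat.choose m j : ℂ) := by
    rw [sub_eq_add_neg, add_pow]
  rw [h1, h2, ← Finset.sum_add_distrib,
    ← Finset.sum_range_reflect
      (fun j => x ^ j * (-1 : ℂ) ^ (m - j) * (Nat.choose m j : ℂ)
        + x ^ j * (Nat.choose m j : ℂ)) (m + 1)]
  have e1 : ∀ j ∈ Finset.range (m + 1),
      (x ^ (m + 1 - 1 - j) * (-1 : ℂ) ^ (m - (m + 1 - 1 - j)) * (Nat.choose m (m + 1 - 1 - j) : ℂ)
        + x ^ (m + 1 - 1 - j) * (Nat.choose m (m + 1 - 1 - j) : ℂ))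
      = ((-1 : ℂ) ^ j + 1) * (Nat.choose m j : ℂ) * x ^ (m - j) := by
    intro j hj
    have hj' : j ≤ m := Nat.lt_succ_iff.mp (Finset.mem_range.mp hj)
    rw [show m + 1 - 1 - j = m - j from rfl, Nat.choose_symm hj', show m - (m - j) = j by omega]
    ring
  rw [Finset.sum_congr rfl e1]
  have e2 : ∑ j ∈ Finset.range (m + 1), ((-1 : ℂ) ^ j + 1) * (Nat.choose m j : ℂ) * x ^ (m - j)
      = ∑ j ∈ Finset.range (2 * (m + 1)), ((-1 : ℂ) ^ j + 1) * (Nat.choose m j : ℂ) * x ^ (m - j) := by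
    apply Finset.sum_subset (Finset.range_subset_range.2 (by omega))
    intro j _ hj
    have hmj : m < j := by simp only [Finset.mem_range, not_lt] at hj; omega
    rw [Nat.choose_eq_zero_of_lt hmj]
    simp
  rw [e2, sum_two_mul, Finset.mul_sum]
  apply Finset.sum_congr rfl
  intro i _
  have ha : (-1 : ℂ) ^ (2 * i) = 1 := by rw [pow_mul]; norm_num
  have hb : (-1 : ℂ) ^ (2 * i + 1) = -1 := by rw [pow_succ, ha]; ring
  rw [ha, hb]
  ring

lemma core (n : ℕ) (x : ℂ) :
    x ^ n = (1 / 2) * ∑ k ∈ Finset.range (n + 1),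
      eulerE k / (Nat.factorial (2 * k)) * (Nat.descFactorial n (2 * k))
        * ((x - 1) ^ (n - 2 * k) + (x + 1) ^ (n - 2 * k)) := by
  -- Step 1: expand each term
  have h1 : ∀ k ∈ Finset.range (n + 1),
      eulerE k / (Nat.factorial (2 * k)) * (Nat.descFactorial n (2 * k))
        * ((x - 1) ^ (n - 2 * k) + (x + 1) ^ (n - 2 * k))
      = 2 * ∑ i ∈ Finset.range (n + 1),
          eulerE k / (Nat.factorial (2 * k)) * (Nat.descFactorial n (2 * k))
            * (Nat.choose (n - 2 * k) (2 * i)) * x ^ (n - (2 * k + 2 * i)) := by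
    intro k _
    rw [pow_sub_add]
    have key : (Nat.descFactorial n (2 * k) : ℂ)
        * ∑ i ∈ Finset.range (n - 2 * k + 1),
            (Nat.choose (n - 2 * k) (2 * i) : ℂ) * x ^ (n - 2 * k - 2 * i)
        = ∑ i ∈ Finset.range (n + 1),
            (Nat.descFactorial n (2 * k) : ℂ) * (Nat.choose (n - 2 * k) (2 * i))
              * x ^ (n - (2 * k + 2 * i)) := by
      rw [Finset.mul_sum]
      rw [Finset.sum_congr rfl (fun i _ => by rw [Nat.sub_sub]; ring :
        ∀ i ∈ Finset.range (n - 2 * k + 1),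
          (Nat.descFactorial n (2 * k) : ℂ)
              * ((Nat.choose (n - 2 * k) (2 * i) : ℂ) * x ^ (n - 2 * k - 2 * i))
            = (Nat.descFactorial n (2 * k) : ℂ) * (Nat.choose (n - 2 * k) (2 * i))
                * x ^ (n - (2 * k + 2 * i)))]
      apply Finset.sum_subset (Finset.range_subset_range.2 (by omega))
      intro i _ hi
      have : n - 2 * k < 2 * i := by
        simp only [Finset.mem_range, not_lt] at hi; omega
      rw [Nat.choose_eq_zero_of_lt this]
      simp
    calc eulerE k / (Nat.factorial (2 * k)) * (Nat.descFactorial n (2 * k))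
          * (2 * ∑ i ∈ Finset.range (n - 2 * k + 1),
              (Nat.choose (n - 2 * k) (2 * i) : ℂ) * x ^ (n - 2 * k - 2 * i))
        = 2 * (eulerE k / (Nat.factorial (2 * k))
            * ((Nat.descFactorial n (2 * k) : ℂ)
              * ∑ i ∈ Finset.range (n - 2 * k + 1),
                  (Nat.choose (n - 2 * k) (2 * i) : ℂ) * x ^ (n - 2 * k - 2 * i))) := by ring
      _ = 2 * (eulerE k / (Nat.factorial (2 * k))
            * ∑ i ∈ Finset.range (n + 1),
                (Nat.descFactorial n (2 * k) : ℂ) * (Nat.choose (n - 2 * k) (2 * i))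
                  * x ^ (n - (2 * k + 2 * i))) := by rw [key]
      _ = _ := by
            rw [Finset.mul_sum]
            congr 1
            apply Finset.sum_congr rfl
            intro i _
            ring
  rw [Finset.sum_congr rfl h1, ← Finset.mul_sum]
  -- Step 2: square → triangle
  have h2 : ∀ k ∈ Finset.range (n + 1),
      ∑ i ∈ Finset.range (n + 1),
          eulerE k / (Nat.factorial (2 * k)) * (Nat.descFactorial n (2 * k))
            * (Nat.choose (n - 2 * k) (2 * i)) * x ^ (n - (2 * k + 2 * i))
      = ∑ i ∈ Finset.range (n + 1 - k),
          eulerE k / (Nat.factorial (2 * k)) * (Nat.descFactorial n (2 * k))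
            * (Nat.choose (n - 2 * k) (2 * i)) * x ^ (n - (2 * k + 2 * i)) := by
    intro k hk
    have hk' : k ≤ n := Nat.lt_succ_iff.mp (Finset.mem_range.mp hk)
    symm
    apply Finset.sum_subset (Finset.range_subset_range.2 (by omega))
    intro i _ hi
    have hik : n + 1 ≤ i + k := by
      simp only [Finset.mem_range, not_lt] at hi; omega
    by_cases hk2 : 2 * k ≤ n
    · rw [Nat.choose_eq_zero_of_lt (by omega : n - 2 * k < 2 * i)]
      simp
    · rw [Nat.descFactorial_eq_zero_iff_lt.2 (by omega : n < 2 * k)]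
      simp
  rw [Finset.sum_congr rfl h2, ← Finset.sum_range_diag_flip (n + 1)
    (fun k i => eulerE k / (Nat.factorial (2 * k)) * (Nat.descFactorial n (2 * k))
      * (Nat.choose (n - 2 * k) (2 * i)) * x ^ (n - (2 * k + 2 * i)))]
  -- Step 3: evaluate inner diagonal sums
  have h3 : ∀ m ∈ Finset.range (n + 1),
      ∑ k ∈ Finset.range (m + 1),
          eulerE k / (Nat.factorial (2 * k)) * (Nat.descFactorial n (2 * k))
            * (Nat.choose (n - 2 * k) (2 * (m - k))) * x ^ (n - (2 * k + 2 * (m - k)))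
      = if m = 0 then x ^ n else 0 := by
    intro m hm
    by_cases hmn : 2 * m ≤ n
    · have per : ∀ k ∈ Finset.range (m + 1),
          eulerE k / (Nat.factorial (2 * k)) * (Nat.descFactorial n (2 * k))
            * (Nat.choose (n - 2 * k) (2 * (m - k))) * x ^ (n - (2 * k + 2 * (m - k)))
          = (Nat.descFactorial n (2 * m) : ℂ) / (Nat.factorial (2 * m)) * x ^ (n - 2 * m)
              * ((Nat.choose (2 * m) (2 * k) : ℂ) * eulerE k) := by
        intro k hk
        have hk' : k ≤ m := Nat.lt_succ_iff.mp (Finset.mem_range.mp hk)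
        have hexp : 2 * k + 2 * (m - k) = 2 * m := by omega
        rw [hexp]
        have hnat : Nat.descFactorial n (2 * k) * Nat.choose (n - 2 * k) (2 * (m - k))
            * Nat.factorial (2 * m)
            = Nat.descFactorial n (2 * m) * Nat.choose (2 * m) (2 * k)
              * Nat.factorial (2 * k) := by
          rw [Nat.descFactorial_eq_factorial_mul_choose,
            Nat.descFactorial_eq_factorial_mul_choose,
            show 2 * (m - k) = 2 * m - 2 * k by omega]
          have hcm := Nat.choose_mul (n := n) (show 2 * k ≤ 2 * m by omega)
          calc Nat.factorial (2 * k) * Nat.choose n (2 * k)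
                * Nat.choose (n - 2 * k) (2 * m - 2 * k) * Nat.factorial (2 * m)
              = Nat.factorial (2 * k) * Nat.factorial (2 * m)
                * (Nat.choose n (2 * k) * Nat.choose (n - 2 * k) (2 * m - 2 * k)) := by ring
            _ = Nat.factorial (2 * k) * Nat.factorial (2 * m)
                * (Nat.choose n (2 * m) * Nat.choose (2 * m) (2 * k)) := by rw [hcm]
            _ = Nat.factorial (2 * m) * Nat.choose n (2 * m) * Nat.choose (2 * m) (2 * k)
                * Nat.factorial (2 * k) := by ring
        have hC : (Nat.descFactorial n (2 * k) : ℂ) * (Nat.choose (n - 2 * k) (2 * (m - k)) : ℂ)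
            * (Nat.factorial (2 * m) : ℂ)
            = (Nat.descFactorial n (2 * m) : ℂ) * (Nat.choose (2 * m) (2 * k) : ℂ)
              * (Nat.factorial (2 * k) : ℂ) := by exact_mod_cast congrArg (Nat.cast (R := ℂ)) hnat
        have hf1 : (Nat.factorial (2 * k) : ℂ) ≠ 0 := Nat.cast_ne_zero.2 (Nat.factorial_ne_zero _)
        have hf2 : (Nat.factorial (2 * m) : ℂ) ≠ 0 := Nat.cast_ne_zero.2 (Nat.factorial_ne_zero _)
        field_simp
        linear_combination (eulerE k * x ^ (n - 2 * m)) * hC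
      rw [Finset.sum_congr rfl per, ← Finset.mul_sum, eulerE_rec m]
      by_cases hm0 : m = 0
      · subst hm0; simp
      · simp [hm0]
    · have hm0 : m ≠ 0 := by omega
      rw [if_neg hm0]
      apply Finset.sum_eq_zero
      intro k hk
      have hk' : k ≤ m := Nat.lt_succ_iff.mp (Finset.mem_range.mp hk)
      by_cases hk2 : 2 * k ≤ n
      · rw [Nat.choose_eq_zero_of_lt (by omega : n - 2 * k < 2 * (m - k))]
        simp
      · rw [Nat.descFactorial_eq_zero_iff_lt.2 (by omega : n < 2 * k)]
        simp
  rw [Finset.sum_congr rfl h3, Finset.sum_ite_eq' (Finset.range (n + 1)) 0 (fun _ => x ^ n)]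
  simp

lemma trunc (n N : ℕ) (hN : n / 2 + 1 ≤ N) (x : ℂ) :
    ∑ k ∈ Finset.range N,
        eulerE k / (Nat.factorial (2 * k)) * (Nat.descFactorial n (2 * k))
          * ((x - 1) ^ (n - 2 * k) + (x + 1) ^ (n - 2 * k))
    = ∑ k ∈ Finset.range (n / 2 + 1),
        eulerE k / (Nat.factorial (2 * k)) * (Nat.descFactorial n (2 * k))
          * ((x - 1) ^ (n - 2 * k) + (x + 1) ^ (n - 2 * k)) := by
  symm
  apply Finset.sum_subset (Finset.range_subset_range.2 hN)
  intro k _ hk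
  have : n < 2 * k := by
    simp only [Finset.mem_range, not_lt] at hk; omega
  rw [Nat.descFactorial_eq_zero_iff_lt.2 this]
  simp

lemma coreN (n N : ℕ) (hN : n / 2 + 1 ≤ N) (x : ℂ) :
    x ^ n = (1 / 2) * ∑ k ∈ Finset.range N,
      eulerE k / (Nat.factorial (2 * k)) * (Nat.descFactorial n (2 * k))
        * ((x - 1) ^ (n - 2 * k) + (x + 1) ^ (n - 2 * k)) := by
  rw [trunc n N hN x, ← trunc n (n + 1) (by omega) x]
  exact core n x

lemma part1 (n : ℕ) (x : ℂ) :
    x ^ n = (1 / 2) * ∑ k ∈ Finset.range (n / 2 + 1),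
      eulerE k / (Nat.factorial (2 * k)) * (Nat.descFactorial n (2 * k))
        * ((x - 1) ^ (n - 2 * k) + (x + 1) ^ (n - 2 * k)) :=
  coreN n (n / 2 + 1) le_rfl x

lemma eval_iter_deriv (p : Polynomial ℂ) (j : ℕ) (y : ℂ) :
    (Polynomial.derivative^[j] p).eval y
      = ∑ n ∈ Finset.range (p.natDegree + 1),
          p.coeff n * (Nat.descFactorial n j) * y ^ (n - j) := by
  conv_lhs => rw [p.as_sum_range_C_mul_X_pow]
  rw [Polynomial.iterate_derivative_sum, Polynomial.eval_finset_sum]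
  apply Finset.sum_congr rfl
  intro n _
  rw [Polynomial.iterate_derivative_C_mul, Polynomial.iterate_derivative_X_pow_eq_C_mul]
  simp [mul_assoc]

lemma part2 (p : Polynomial ℂ) (x : ℂ) :
    p.eval x = (1 / 2) * ∑ k ∈ Finset.range (p.natDegree + 1),
      eulerE k / (Nat.factorial (2 * k))
        * ((Polynomial.derivative^[2 * k] p).eval (x - 1)
           + (Polynomial.derivative^[2 * k] p).eval (x + 1)) := by
  set D := p.natDegree with hD
  calc p.eval x = ∑ n ∈ Finset.range (D + 1), p.coeff n * x ^ n := Polynomial.eval_eq_sum_range x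
    _ = ∑ n ∈ Finset.range (D + 1), p.coeff n
          * ((1 / 2) * ∑ k ∈ Finset.range (D + 1),
              eulerE k / (Nat.factorial (2 * k)) * (Nat.descFactorial n (2 * k))
                * ((x - 1) ^ (n - 2 * k) + (x + 1) ^ (n - 2 * k))) := by
        apply Finset.sum_congr rfl
        intro n hn
        have hn' : n ≤ D := Nat.lt_succ_iff.mp (Finset.mem_range.mp hn)
        rw [← coreN n (D + 1) (by omega) x]
    _ = ∑ n ∈ Finset.range (D + 1), ∑ k ∈ Finset.range (D + 1),
          (1 / 2) * (p.coeff n * (eulerE k / (Nat.factorial (2 * k))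
            * (Nat.descFactorial n (2 * k))
            * ((x - 1) ^ (n - 2 * k) + (x + 1) ^ (n - 2 * k)))) := by
        apply Finset.sum_congr rfl
        intro n _
        rw [Finset.mul_sum, Finset.mul_sum]
        apply Finset.sum_congr rfl
        intro k _
        ring
    _ = ∑ k ∈ Finset.range (D + 1), ∑ n ∈ Finset.range (D + 1),
          (1 / 2) * (p.coeff n * (eulerE k / (Nat.factorial (2 * k))
            * (Nat.descFactorial n (2 * k))
            * ((x - 1) ^ (n - 2 * k) + (x + 1) ^ (n - 2 * k)))) := Finset.sum_comm
    _ = (1 / 2) * ∑ k ∈ Finset.range (D + 1),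
          eulerE k / (Nat.factorial (2 * k))
            * ((Polynomial.derivative^[2 * k] p).eval (x - 1)
               + (Polynomial.derivative^[2 * k] p).eval (x + 1)) := by
        rw [Finset.mul_sum]
        apply Finset.sum_congr rfl
        intro k _
        rw [eval_iter_deriv, eval_iter_deriv, ← Finset.sum_add_distrib, ← hD,
          Finset.mul_sum, Finset.mul_sum]
        apply Finset.sum_congr rfl
        intro n _
        ring

/-- Euler-number interpolation formula: for every `n` and `x`,
`xⁿ = ½ Σ_{k=0}^{⌊n/2⌋} (E_{2k}/(2k)!)·(n!/(n-2k)!)·[(x-1)^{n-2k} + (x+1)^{n-2k}]`;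
equivalently, every polynomial `p` satisfies
`p(x) = ½ Σ_k (E_{2k}/(2k)!)[p^{(2k)}(x-1) + p^{(2k)}(x+1)]`. -/
theorem euler_interpolation :
    (∀ (n : ℕ) (x : ℂ),
      x ^ n = (1 / 2) * ∑ k ∈ Finset.range (n / 2 + 1),
        eulerE k / (Nat.factorial (2 * k))
          * (Nat.descFactorial n (2 * k))
          * ((x - 1) ^ (n - 2 * k) + (x + 1) ^ (n - 2 * k))) ∧
    (∀ (p : Polynomial ℂ) (x : ℂ),
      p.eval x = (1 / 2) * ∑ k ∈ Finset.range (p.natDegree + 1),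
        eulerE k / (Nat.factorial (2 * k))
          * ((Polynomial.derivative^[2 * k] p).eval (x - 1)
             + (Polynomial.derivative^[2 * k] p).eval (x + 1))) :=
  ⟨part1, part2⟩
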